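/- arXiv:2411.01405 — 3 statements merged into one kernel-verified Lean document; each statement's English description precedes it below -/
import Mathlib

section
/- Let p ≥ 1 be an integer, let k > 0 be a real number, and let P = {v ∈ {0,1}^p : v₁ = 1}. For every function λ : P → ℝ with λ(v) ≥ 0 for all v ∈ P and Σ_{v∈P} λ(v) = k, one has det( Σ_{v∈P} λ(v)·v vᵀ ) ≤ k^p / 2^{2(p−1)}. -/
open Matrix BigOperators

/-- A real PSD matrix of size p with trace p has determinant at most 1 (AM–GM). -/
lemma det_le_one_of_psd_trace {p : ℕ} (hp : 1 ≤ p) (B : Matrix (Fin p) (Fin p) ℝ)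
    (hB : B.PosSemidef) (htr : B.trace = p) : B.det ≤ 1 := by
  have hH := hB.1
  have hdet : B.det = ∏ i, hH.eigenvalues i := by
    simpa using hH.det_eq_prod_eigenvalues
  have htr' : B.trace = ∑ i, hH.eigenvalues i := by
    simpa using hH.trace_eq_sum_eigenvalues
  have hp0 : (0:ℝ) < p := by exact_mod_cast hp
  have hμ : ∀ i ∈ Finset.univ, (0:ℝ) ≤ hH.eigenvalues i := fun i _ => hB.eigenvalues_nonneg i
  have hw' : ∑ _i : Fin p, (1/(p:ℝ)) = 1 := by
    simp [Finset.sum_const]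
    field_simp
  have key := Real.geom_mean_le_arith_mean_weighted Finset.univ (fun _ => 1/(p:ℝ))
    hH.eigenvalues (fun i _ => by positivity) hw' hμ
  have hrhs : ∑ i, (1/(p:ℝ)) * hH.eigenvalues i = 1 := by
    rw [← Finset.mul_sum, ← htr', htr]
    field_simp
  have hlhs : ∏ i, hH.eigenvalues i ^ (1/(p:ℝ)) = (∏ i, hH.eigenvalues i) ^ (1/(p:ℝ)) := by
    rw [← Real.finset_prod_rpow _ _ hμ]
  rw [hlhs, hrhs] at key
  have hprod0 : (0:ℝ) ≤ ∏ i, hH.eigenvalues i := Finset.prod_nonneg hμ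
  have hfin := pow_le_pow_left₀ (Real.rpow_nonneg hprod0 _) key p
  rw [one_pow, one_div, Real.rpow_inv_natCast_pow hprod0 (by omega)] at hfin
  rw [hdet]; exact hfin

lemma psd_vecMulVec {p : ℕ} (w : Fin p → ℝ) : (vecMulVec w w).PosSemidef := by
  rw [posSemidef_iff_dotProduct_mulVec]
  constructor
  · ext i j
    simp [vecMulVec_apply, conjTranspose_apply, mul_comm]
  · intro x
    have h : star x ⬝ᵥ (vecMulVec w w *ᵥ x) = (∑ i, w i * x i) * (∑ i, w i * x i) := by
      rw [Finset.sum_mul_sum]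
      simp only [dotProduct, mulVec, vecMulVec_apply, star_trivial, Finset.mul_sum]
      refine Finset.sum_congr rfl fun i _ => Finset.sum_congr rfl fun j _ => by ring
    rw [h]
    exact mul_self_nonneg _

lemma psd_smul' {p : ℕ} {A : Matrix (Fin p) (Fin p) ℝ} (hA : A.PosSemidef) {a : ℝ}
    (ha : 0 ≤ a) : (a • A).PosSemidef := by
  rw [posSemidef_iff_dotProduct_mulVec]
  constructor
  · show (a • A)ᴴ = a • A
    rw [conjTranspose_smul, hA.1.eq]
    simp
  · intro x
    rw [smul_mulVec, dotProduct_smul, smul_eq_mul]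
    exact mul_nonneg ha (hA.dotProduct_mulVec_nonneg x)

lemma conj_vecMulVec {p : ℕ} (C : Matrix (Fin p) (Fin p) ℝ) (v : Fin p → ℝ) :
    C * vecMulVec v v * Cᵀ = vecMulVec (C *ᵥ v) (C *ᵥ v) := by
  ext i j
  simp only [Matrix.mul_apply, vecMulVec_apply, transpose_apply, mulVec, dotProduct]
  rw [Finset.sum_mul_sum, Finset.sum_comm]
  refine Finset.sum_congr rfl fun b _ => ?_
  rw [Finset.sum_mul]
  refine Finset.sum_congr rfl fun a _ => by ring

/-- The continuous relaxation over P = {v ∈ {0,1}^p : v₁ = 1} has value at most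
k^p / 2^(2(p−1)). -/
theorem zero_one_relaxation_bound
    (p : ℕ) (hp : 1 ≤ p) (k : ℝ) (hk : 0 < k)
    (lam : (Fin p → Bool) → ℝ)
    (hlam : ∀ s ∈ Finset.univ.filter (fun s : Fin p → Bool => s ⟨0, hp⟩ = true),
      0 ≤ lam s)
    (hsum : ∑ s ∈ Finset.univ.filter (fun s : Fin p → Bool => s ⟨0, hp⟩ = true),
      lam s = k) :
    (∑ s ∈ Finset.univ.filter (fun s : Fin p → Bool => s ⟨0, hp⟩ = true),
        lam s • vecMulVec (fun i => if s i then (1 : ℝ) else 0)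
          (fun i => if s i then (1 : ℝ) else 0)).det
      ≤ k ^ p / 2 ^ (2 * (p - 1)) := by
  classical
  set F := Finset.univ.filter (fun s : Fin p → Bool => s ⟨0, hp⟩ = true) with hF
  set c := Real.sqrt k with hc
  have hcpos : 0 < c := Real.sqrt_pos.mpr hk
  have hc2 : c * c = k := Real.mul_self_sqrt hk.le
  set v : (Fin p → Bool) → Fin p → ℝ := fun s i => if s i then (1:ℝ) else 0 with hv
  set C : Matrix (Fin p) (Fin p) ℝ :=
    fun i j => if i = j then (if i = (⟨0, hp⟩ : Fin p) then 1/c else 2/c)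
      else if j = (⟨0, hp⟩ : Fin p) then -(1/c) else 0 with hC
  set M : Matrix (Fin p) (Fin p) ℝ := ∑ s ∈ F, lam s • vecMulVec (v s) (v s) with hM
  set w : (Fin p → Bool) → Fin p → ℝ := fun s => C *ᵥ (v s) with hw
  -- each w s has all squares equal to 1/k
  have hwsq : ∀ s ∈ F, ∀ i, w s i * w s i = 1 / k := by
    intro s hs i
    have hs0 : s ⟨0, hp⟩ = true := (Finset.mem_filter.mp hs).2
    have hval : w s i = (if i = (⟨0, hp⟩ : Fin p) then 1/c else (2 * v s i - 1)/c) := by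
      by_cases hi : i = (⟨0, hp⟩ : Fin p)
      · subst hi
        simp only [hw, mulVec, dotProduct]
        rw [Finset.sum_eq_single (⟨0, hp⟩ : Fin p)]
        · simp [hC, hv, hs0]
        · intro b _ hb
          simp [hC, hv, Ne.symm hb, hb]
        · simp
      · simp only [hw, mulVec, dotProduct, if_neg hi]
        rw [Finset.sum_eq_add_of_mem i (⟨0, hp⟩ : Fin p) (Finset.mem_univ _)
          (Finset.mem_univ _) hi ?_]
        · by_cases hsi : s i <;> simp [hC, hi, hv, hs0, hsi] <;> ring
        · intro b _ hb
          rcases hb with ⟨hb1, hb2⟩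
          simp [hC, Ne.symm hb1, hb2]
    rw [hval]
    by_cases hi : i = (⟨0, hp⟩ : Fin p)
    · rw [if_pos hi, div_mul_div_comm, hc2]
      norm_num
    · rw [if_neg hi]
      have : v s i = 0 ∨ v s i = 1 := by
        simp only [hv]
        by_cases h : s i <;> simp [h]
      rcases this with h | h <;>
      · rw [h, div_mul_div_comm, hc2]
        norm_num
  -- the transformed matrix
  set B : Matrix (Fin p) (Fin p) ℝ := C * M * Cᵀ with hB
  have hBsum : B = ∑ s ∈ F, lam s • vecMulVec (w s) (w s) := by
    rw [hB, hM, Matrix.mul_sum, Matrix.sum_mul]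
    refine Finset.sum_congr rfl fun s _ => ?_
    rw [Matrix.mul_smul, Matrix.smul_mul, conj_vecMulVec]
  -- B is PSD
  have hBpsd : B.PosSemidef := by
    rw [hBsum]
    refine Finset.sum_induction _ _ (fun a b ha hb => ha.add hb) Matrix.PosSemidef.zero ?_
    intro s hs
    exact psd_smul' (psd_vecMulVec (w s)) (hlam s hs)
  -- trace of B
  have hBtr : B.trace = p := by
    rw [hBsum, Matrix.trace_sum]
    have htrs : ∀ s ∈ F, (lam s • vecMulVec (w s) (w s)).trace = lam s * (p / k) := by
      intro s hs
      rw [Matrix.trace_smul, smul_eq_mul]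
      congr 1
      simp only [Matrix.trace, Matrix.diag_apply, vecMulVec_apply]
      rw [Finset.sum_congr rfl (fun i _ => hwsq s hs i)]
      simp [Finset.sum_const]
      ring
    rw [Finset.sum_congr rfl htrs, ← Finset.sum_mul, hsum]
    field_simp
  have hdetB : B.det ≤ 1 := det_le_one_of_psd_trace hp B hBpsd hBtr
  -- determinant of C
  have hCtri : C.det = ∏ i, C i i := by
    apply Matrix.det_of_lowerTriangular
    intro i j hij
    have hij' : i < j := by simpa using hij
    have h1 : i ≠ j := ne_of_lt hij'
    have h2 : j ≠ (⟨0, hp⟩ : Fin p) := by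
      intro h
      rw [h] at hij'
      simp [Fin.lt_def] at hij'
    simp [hC, h1, h2]
  have hCdiag : ∏ i, C i i = (1/c) * (2/c)^(p-1) := by
    rw [← Finset.mul_prod_erase Finset.univ _ (Finset.mem_univ (⟨0, hp⟩ : Fin p))]
    have h0 : C (⟨0, hp⟩ : Fin p) (⟨0, hp⟩ : Fin p) = 1/c := by simp [hC]
    have h1 : ∀ i ∈ Finset.univ.erase (⟨0, hp⟩ : Fin p), C i i = 2/c := by
      intro i hi
      have := Finset.ne_of_mem_erase hi
      simp [hC, this]
    rw [h0, Finset.prod_congr rfl h1, Finset.prod_const]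
    congr 1
    rw [Finset.card_erase_of_mem (Finset.mem_univ _), Finset.card_univ, Fintype.card_fin]
  have hCdet : C.det = (1/c) * (2/c)^(p-1) := by rw [hCtri, hCdiag]
  have hCdetpos : 0 < C.det := by
    rw [hCdet]
    positivity
  -- relate det B and det M
  have hdet_rel : B.det = C.det ^ 2 * M.det := by
    rw [hB, Matrix.det_mul, Matrix.det_mul, Matrix.det_transpose]
    ring
  have hkp : k ^ p = k * k ^ (p-1) := by
    rw [← pow_succ']
    congr 1
    omega
  have hCdetsq : C.det ^ 2 = 4^(p-1) / k^p := by
    have h1c : (1/c)^2 = 1/k := by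
      rw [div_pow, one_pow, sq, hc2]
    have h2c : (2/c)^2 = 4/k := by
      rw [div_pow, sq, sq, hc2]
      norm_num
    calc C.det ^ 2 = (1/c)^2 * ((2/c)^2)^(p-1) := by
          rw [hCdet, mul_pow, ← pow_mul, mul_comm (p-1) 2, pow_mul]
      _ = (1/k) * (4/k)^(p-1) := by rw [h1c, h2c]
      _ = 4^(p-1) / k^p := by
          rw [div_pow, div_mul_div_comm, one_mul, ← hkp]
  have hMdet : M.det = B.det / (C.det ^ 2) := by
    rw [hdet_rel]
    field_simp
  have h4 : (2:ℝ) ^ (2 * (p-1)) = 4 ^ (p-1) := by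
    rw [pow_mul]
    norm_num
  calc M.det = B.det / (C.det ^ 2) := hMdet
    _ ≤ 1 / (C.det ^ 2) := by gcongr
    _ = k ^ p / 4 ^ (p-1) := by rw [hCdetsq, one_div_div]
    _ = k ^ p / 2 ^ (2 * (p-1)) := by rw [h4]
end

section
/- Let p ≥ 1 be an integer, let P′ be a nonempty finite set of vectors in ℝ^p, let Λ be a real symmetric positive definite p×p matrix, let k > 0, and let ν = max_{v∈P′} vᵀ Λ v. Then for every λ : P′ → ℝ with λ(v) ≥ 0 for all v and Σ_{v∈P′} λ(v) = k, one has det( Σ_{v∈P′} λ(v)·v vᵀ ) · det(Λ) ≤ exp(k·ν − p). -/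
open Matrix BigOperators

lemma myTrace_eq_sum_eigenvalues {p : ℕ} {A : Matrix (Fin p) (Fin p) ℝ}
    (hA : A.IsHermitian) : A.trace = ∑ i, hA.eigenvalues i := by
  simpa using hA.trace_eq_sum_eigenvalues

lemma myDet_le_exp_trace {p : ℕ} {A : Matrix (Fin p) (Fin p) ℝ}
    (hA : A.PosSemidef) : A.det ≤ Real.exp (A.trace - p) := by
  have hH := hA.isHermitian
  have h1 : A.det = ∏ i, hH.eigenvalues i := by
    simpa using hH.det_eq_prod_eigenvalues
  rw [h1, myTrace_eq_sum_eigenvalues hH]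
  calc ∏ i, hH.eigenvalues i
      ≤ ∏ i, Real.exp (hH.eigenvalues i - 1) := by
        apply Finset.prod_le_prod
        · exact fun i _ => hA.eigenvalues_nonneg i
        · intro i _
          have := Real.add_one_le_exp (hH.eigenvalues i - 1)
          linarith
    _ = Real.exp (∑ i, (hH.eigenvalues i - 1)) := by rw [Real.exp_sum]
    _ = Real.exp ((∑ i, hH.eigenvalues i) - p) := by
        rw [Finset.sum_sub_distrib]
        simp

lemma vecMulVec_posSemidef {p : ℕ} (v : Fin p → ℝ) :
    (vecMulVec v v).PosSemidef := by
  refine Matrix.PosSemidef.of_dotProduct_mulVec_nonneg ?_ ?_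
  · ext i j
    simp [Matrix.vecMulVec_apply, mul_comm]
  · intro x
    have : star x ⬝ᵥ (vecMulVec v v) *ᵥ x = (v ⬝ᵥ x) * (v ⬝ᵥ x) := by
      simp [dotProduct, Matrix.mulVec, Matrix.vecMulVec_apply,
        Finset.mul_sum, Finset.sum_mul]
      rw [Finset.sum_comm]
      apply Finset.sum_congr rfl
      intro i _
      apply Finset.sum_congr rfl
      intro j _
      ring
    rw [this]
    exact mul_self_nonneg _

lemma trace_vecMulVec_mul {p : ℕ} (v : Fin p → ℝ) (Λ : Matrix (Fin p) (Fin p) ℝ) :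
    (vecMulVec v v * Λ).trace = v ⬝ᵥ Λ *ᵥ v := by
  simp [Matrix.trace, Matrix.diag, Matrix.mul_apply, Matrix.vecMulVec_apply,
    dotProduct, Matrix.mulVec, Finset.mul_sum]
  rw [Finset.sum_comm]
  apply Finset.sum_congr rfl
  intro i _
  apply Finset.sum_congr rfl
  intro j _
  ring

lemma dotProduct_sum_aux {p : ℕ} {ι : Type*} (s : Finset ι) (x : Fin p → ℝ)
    (f : ι → (Fin p → ℝ)) : x ⬝ᵥ (∑ v ∈ s, f v) = ∑ v ∈ s, x ⬝ᵥ f v := by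
  simp only [dotProduct, Finset.sum_apply, Finset.mul_sum]
  exact Finset.sum_comm

lemma sum_mulVec_aux {p : ℕ} {ι : Type*} [DecidableEq ι] (s : Finset ι) (f : ι → Matrix (Fin p) (Fin p) ℝ)
    (x : Fin p → ℝ) : (∑ v ∈ s, f v) *ᵥ x = ∑ v ∈ s, f v *ᵥ x := by
  induction s using Finset.induction_on with
  | empty => simp
  | insert a s h ih => simp [Finset.sum_insert h, Matrix.add_mulVec, ih]

/-- Weak duality between the continuous relaxation of D-optimal design and its
Lagrangian dual. -/
theorem design_weak_duality
    (p : ℕ) (hp : 1 ≤ p) (P' : Finset (Fin p → ℝ)) (hP' : P'.Nonempty)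
    (Λ : Matrix (Fin p) (Fin p) ℝ) (hΛ : Λ.PosDef) (k : ℝ) (hk : 0 < k)
    (ν : ℝ) (hν : ν = P'.sup' hP' fun v => v ⬝ᵥ Λ *ᵥ v) :
    ∀ lam : (Fin p → ℝ) → ℝ, (∀ v ∈ P', 0 ≤ lam v) → (∑ v ∈ P', lam v = k) →
      (∑ v ∈ P', lam v • vecMulVec v v).det * Λ.det ≤ Real.exp (k * ν - p) := by
  intro lam hlam hsum
  set M : Matrix (Fin p) (Fin p) ℝ := ∑ v ∈ P', lam v • vecMulVec v v with hM
  -- M is PSD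
  have hMpsd : M.PosSemidef := by
    refine Matrix.PosSemidef.of_dotProduct_mulVec_nonneg ?_ ?_
    · show Mᴴ = M
      rw [hM, Matrix.conjTranspose_sum]
      apply Finset.sum_congr rfl
      intro v hv
      rw [Matrix.conjTranspose_smul, (vecMulVec_posSemidef v).isHermitian, star_trivial]
    · intro x
      rw [hM, sum_mulVec_aux, dotProduct_sum_aux]
      apply Finset.sum_nonneg
      intro v hv
      rw [Matrix.smul_mulVec, dotProduct_smul]
      exact mul_nonneg (hlam v hv) ((vecMulVec_posSemidef v).dotProduct_mulVec_nonneg x)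
  -- conjugate by sqrt of Λ
  set S := (open scoped MatrixOrder in CFC.sqrt Λ) with hS
  have hSpsd : S.PosSemidef := (open scoped MatrixOrder in (CFC.sqrt_nonneg Λ).posSemidef)
  have hSS : S * S = Λ := (open scoped MatrixOrder in CFC.sqrt_mul_sqrt_self Λ hΛ.posSemidef.nonneg)
  have hSH : Sᴴ = S := hSpsd.isHermitian
  have hNpsd : (S * M * S).PosSemidef := by
    have := hMpsd.mul_mul_conjTranspose_same S
    rwa [hSH] at this
  -- determinant identity
  have hdet : (S * M * S).det = M.det * Λ.det := by
    rw [Matrix.det_mul, Matrix.det_mul, ← hSS, Matrix.det_mul]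
    ring
  -- trace identity
  have htr : (S * M * S).trace = ∑ v ∈ P', lam v * (v ⬝ᵥ Λ *ᵥ v) := by
    rw [Matrix.trace_mul_comm, ← mul_assoc, hSS]
    have : Λ * M = ∑ v ∈ P', lam v • (Λ * vecMulVec v v) := by
      rw [hM, Finset.mul_sum]
      exact Finset.sum_congr rfl fun v _ => (Matrix.mul_smul _ _ _)
    rw [this, Matrix.trace_sum]
    apply Finset.sum_congr rfl
    intro v hv
    rw [Matrix.trace_smul, Matrix.trace_mul_comm, trace_vecMulVec_mul]
    simp
  -- bound the trace
  have hvle : ∀ v ∈ P', v ⬝ᵥ Λ *ᵥ v ≤ ν := by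
    intro v hv
    rw [hν]
    exact Finset.le_sup' (fun v => v ⬝ᵥ Λ *ᵥ v) hv
  have htrle : (S * M * S).trace ≤ k * ν := by
    rw [htr, ← hsum, Finset.sum_mul]
    apply Finset.sum_le_sum
    intro v hv
    exact mul_le_mul_of_nonneg_left (hvle v hv) (hlam v hv)
  -- conclude
  calc M.det * Λ.det = (S * M * S).det := hdet.symm
    _ ≤ Real.exp ((S * M * S).trace - p) := myDet_le_exp_trace hNpsd
    _ ≤ Real.exp (k * ν - p) := by
        apply Real.exp_le_exp.mpr
        linarith
end

section
/- Let p ≥ 1 be an integer, let P′ be a nonempty finite set of vectors in ℝ^p, let k > 0, and let λ* : P′ → ℝ with λ*(v) ≥ 0 and Σ_{v∈P′} λ*(v) = k be such that S* = Σ_{v∈P′} λ*(v)·v vᵀ is invertible and det(Σ_{v∈P′} λ(v)·v vᵀ) ≤ det(S*) for every λ : P′ → ℝ with λ(v) ≥ 0 and Σ_{v∈P′} λ(v) = k. Then max_{v∈P′} vᵀ (S*)⁻¹ v = p/k. -/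
open Matrix BigOperators

private lemma trace_mul_vecMulVec {p : ℕ} (M : Matrix (Fin p) (Fin p) ℝ) (v : Fin p → ℝ) :
    (M * vecMulVec v v).trace = v ⬝ᵥ M *ᵥ v := by
  simp only [Matrix.trace, Matrix.diag, Matrix.mul_apply, vecMulVec_apply, dotProduct, mulVec,
    Finset.mul_sum]
  exact Finset.sum_congr rfl fun i _ => Finset.sum_congr rfl fun j _ => by ring

private lemma dot_vecMulVec {p : ℕ} (v x : Fin p → ℝ) :
    x ⬝ᵥ (vecMulVec v v) *ᵥ x = (v ⬝ᵥ x)^2 := by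
  simp only [dotProduct, mulVec, vecMulVec_apply, Finset.mul_sum, sq]
  simp only [Finset.sum_mul]
  exact Finset.sum_congr rfl fun i _ => Finset.sum_congr rfl fun j _ => by ring

private lemma det_one_add_row_mul_col {ι : Type*} [Unique ι] {p : ℕ}
    (M : Matrix (Fin p) (Fin p) ℝ) (u w : Fin p → ℝ) :
    (1 + replicateRow ι u * M * replicateCol ι w).det = 1 + u ⬝ᵥ M *ᵥ w := by
  rw [det_unique]
  simp only [Matrix.add_apply, Matrix.one_apply_eq, Matrix.mul_apply, Matrix.replicateRow_apply,
    Matrix.replicateCol_apply, dotProduct, mulVec, Finset.sum_mul, Finset.mul_sum]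
  rw [Finset.sum_comm]
  exact congrArg _ (Finset.sum_congr rfl fun i _ => Finset.sum_congr rfl fun j _ => by ring)

private lemma exists_good_t (n : ℕ) (a : ℝ) (ha : (n : ℝ) + 1 < a) :
    ∃ t : ℝ, 0 < t ∧ t < 1 ∧ 1 < (1 - t)^n * (1 + t * (a - 1)) := by
  set c : ℝ := n * (a - 1) with hc
  have hn0 : (0:ℝ) ≤ n := Nat.cast_nonneg n
  have hc0 : 0 ≤ c := mul_nonneg hn0 (by linarith)
  set t : ℝ := min (1/2) ((a - (n+1)) / (c + 1)) with htdef
  have hq : 0 < (a - (n+1)) / (c + 1) := div_pos (by linarith) (by linarith)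
  have ht0 : 0 < t := lt_min (by norm_num) hq
  have ht1 : t < 1 := lt_of_le_of_lt (min_le_left _ _) (by norm_num)
  have htc : t * c < a - (n+1) := by
    have h2 : t ≤ (a - (n+1)) / (c + 1) := min_le_right _ _
    have h3 : t * (c + 1) ≤ a - (n+1) := by
      rw [← le_div_iff₀ (by linarith)]; exact h2
    nlinarith
  have hb : 1 - (n:ℝ)*t ≤ (1-t)^n := by
    have := one_add_mul_le_pow (a := -t) (by linarith) n
    calc 1 - (n:ℝ)*t = 1 + n * (-t) := by ring
      _ ≤ (1 + (-t))^n := this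
      _ = (1-t)^n := by ring_nf
  refine ⟨t, ht0, ht1, ?_⟩
  have hmul : 0 ≤ 1 + t * (a-1) := by nlinarith
  simp only [hc] at htc
  calc (1:ℝ) < (1 - (n:ℝ)*t) * (1 + t*(a-1)) := by nlinarith [mul_lt_mul_of_pos_left htc ht0]
    _ ≤ (1-t)^n * (1 + t*(a-1)) := mul_le_mul_of_nonneg_right hb hmul

private lemma dot_sum_mulVec {p : ℕ} (P' : Finset (Fin p → ℝ)) (lam : (Fin p → ℝ) → ℝ)
    (x : Fin p → ℝ) :
    x ⬝ᵥ (∑ v ∈ P', lam v • vecMulVec v v) *ᵥ x = ∑ v ∈ P', lam v * (v ⬝ᵥ x)^2 := by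
  classical
  induction P' using Finset.induction with
  | empty => simp
  | insert a s h ih =>
      rw [Finset.sum_insert h, Finset.sum_insert h, add_mulVec, dotProduct_add,
        smul_mulVec, dotProduct_smul, smul_eq_mul, dot_vecMulVec, ih]

/-- KKT characterization: at an optimum of the continuous relaxation, the maximal
leverage score max_{v ∈ P′} vᵀ(S*)⁻¹v equals p/k. -/
theorem relaxation_optimality_leverage
    (p : ℕ) (hp : 1 ≤ p) (P' : Finset (Fin p → ℝ)) (hP' : P'.Nonempty)
    (k : ℝ) (hk : 0 < k) (lamStar : (Fin p → ℝ) → ℝ)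
    (hnn : ∀ v ∈ P', 0 ≤ lamStar v) (hsum : ∑ v ∈ P', lamStar v = k)
    (Sstar : Matrix (Fin p) (Fin p) ℝ)
    (hSstar : Sstar = ∑ v ∈ P', lamStar v • vecMulVec v v)
    (hinv : IsUnit Sstar.det)
    (hopt : ∀ lam : (Fin p → ℝ) → ℝ, (∀ v ∈ P', 0 ≤ lam v) →
      (∑ v ∈ P', lam v = k) →
      (∑ v ∈ P', lam v • vecMulVec v v).det ≤ Sstar.det) :
    P'.sup' hP' (fun v => v ⬝ᵥ Sstar⁻¹ *ᵥ v) = (p : ℝ) / k := by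
  obtain ⟨n, rfl⟩ : ∃ n, p = n + 1 := ⟨p - 1, by omega⟩
  -- positivity of det Sstar
  have hPSD : Sstar.PosSemidef := by
    refine Matrix.PosSemidef.of_dotProduct_mulVec_nonneg ?_ ?_
    · show Sstarᴴ = Sstar
      rw [hSstar]
      ext i j
      simp only [conjTranspose_apply, Finset.sum_apply, Matrix.sum_apply, Matrix.smul_apply,
        vecMulVec_apply, star_trivial, smul_eq_mul]
      exact Finset.sum_congr rfl fun v _ => by ring
    · intro x
      have hx : star x = x := rfl
      rw [hx, hSstar, dot_sum_mulVec]
      exact Finset.sum_nonneg fun v hv => mul_nonneg (hnn v hv) (sq_nonneg _)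
  have hdetpos : 0 < Sstar.det := by
    have hnn0 : 0 ≤ Sstar.det := by
      exact hPSD.det_nonneg
    exact lt_of_le_of_ne hnn0 (fun h => hinv.ne_zero h.symm)
  -- upper bound on leverage scores
  have hbound : ∀ v ∈ P', v ⬝ᵥ Sstar⁻¹ *ᵥ v ≤ ((n:ℝ)+1) / k := by
    intro v hv
    by_contra hgt
    push_neg at hgt
    set α : ℝ := v ⬝ᵥ Sstar⁻¹ *ᵥ v with hα
    have ha : (n:ℝ) + 1 < k * α := by
      rw [div_lt_iff₀ hk] at hgt; linarith [hgt]
    obtain ⟨t, ht0, ht1, hkey⟩ := exists_good_t n (k*α) ha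
    have h1t : (0:ℝ) < 1 - t := by linarith
    set lam : (Fin (n+1) → ℝ) → ℝ :=
      fun w => (1-t) * lamStar w + (if w = v then t*k else 0) with hlam
    have hnn' : ∀ w ∈ P', 0 ≤ lam w := by
      intro w hw
      have h0 := hnn w hw
      have h1 : (0:ℝ) ≤ (if w = v then t*k else 0) := by
        split
        · nlinarith
        · exact le_refl 0
      exact add_nonneg (mul_nonneg h1t.le h0) h1
    have hsum' : ∑ w ∈ P', lam w = k := by
      simp only [hlam]
      rw [Finset.sum_add_distrib, ← Finset.mul_sum, hsum, Finset.sum_ite_eq' P' v, if_pos hv]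
      ring
    have hSmat : ∑ w ∈ P', lam w • vecMulVec w w
        = (1-t) • Sstar + (t*k) • vecMulVec v v := by
      simp only [hlam, add_smul, ite_smul, zero_smul, Finset.sum_add_distrib,
        Finset.sum_ite_eq' P', if_pos hv]
      congr 1
      rw [hSstar, Finset.smul_sum]
      exact Finset.sum_congr rfl fun w _ => mul_smul _ _ _
    -- determinant computation
    have hAdet : ((1-t) • Sstar).det = (1-t)^(n+1) * Sstar.det := by
      rw [det_smul]; simp [Fintype.card_fin]
    have hAunit : IsUnit ((1-t) • Sstar).det := by
      rw [hAdet]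
      exact isUnit_iff_ne_zero.mpr (ne_of_gt (mul_pos (pow_pos h1t _) hdetpos))
    have hIv : Invertible (1-t) := invertibleOfNonzero h1t.ne'
    have hAinv : ((1-t) • Sstar)⁻¹ = (1-t)⁻¹ • Sstar⁻¹ := by
      rw [Matrix.inv_smul Sstar (1-t) hinv, invOf_eq_inv]
    have hr : (t*k) • vecMulVec v v
        = replicateCol (Fin 1) ((t*k) • v) * replicateRow (Fin 1) v := by
      ext i j
      simp [Matrix.mul_apply, vecMulVec_apply, mul_assoc]
    have hdet : (∑ w ∈ P', lam w • vecMulVec w w).det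
        = Sstar.det * ((1-t)^n * (1 + t*(k*α-1))) := by
      rw [hSmat, hr]; erw [det_add_replicateCol_mul_replicateRow (ι := Fin 1) hAunit]; rw [det_one_add_row_mul_col, hAinv, hAdet]
      rw [mulVec_smul, smul_mulVec, dotProduct_smul, dotProduct_smul]
      simp only [smul_eq_mul, ← hα]
      have hps : (1-t)^(n+1) = (1-t)^n * (1-t) := pow_succ _ _
      field_simp
      ring
    have hle := hopt lam hnn' hsum'
    rw [hdet] at hle
    nlinarith
  -- trace identity
  have htr : ∑ v ∈ P', lamStar v * (v ⬝ᵥ Sstar⁻¹ *ᵥ v) = (n:ℝ) + 1 := by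
    have h1 : Sstar⁻¹ * Sstar = 1 := nonsing_inv_mul _ hinv
    calc ∑ v ∈ P', lamStar v * (v ⬝ᵥ Sstar⁻¹ *ᵥ v)
        = ∑ v ∈ P', (Sstar⁻¹ * (lamStar v • vecMulVec v v)).trace := by
          refine Finset.sum_congr rfl fun v _ => ?_
          rw [_root_.Matrix.mul_smul, trace_smul, trace_mul_vecMulVec, smul_eq_mul]
      _ = (Sstar⁻¹ * ∑ v ∈ P', lamStar v • vecMulVec v v).trace := by
          rw [Matrix.mul_sum, trace_sum]
      _ = (Sstar⁻¹ * Sstar).trace := by rw [← hSstar]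
      _ = (n:ℝ) + 1 := by rw [h1, trace_one]; simp [Fintype.card_fin]
  have hcast : ((n+1 : ℕ) : ℝ) = (n:ℝ) + 1 := by push_cast; ring
  apply le_antisymm
  · refine Finset.sup'_le _ _ fun v hv => ?_
    rw [hcast]; exact hbound v hv
  · rw [hcast, div_le_iff₀ hk]
    calc (n:ℝ) + 1 = ∑ v ∈ P', lamStar v * (v ⬝ᵥ Sstar⁻¹ *ᵥ v) := htr.symm
      _ ≤ ∑ v ∈ P', lamStar v * P'.sup' hP' (fun w => w ⬝ᵥ Sstar⁻¹ *ᵥ w) :=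
          Finset.sum_le_sum fun v hv =>
            mul_le_mul_of_nonneg_left
              (Finset.le_sup' (f := fun w => w ⬝ᵥ Sstar⁻¹ *ᵥ w) hv) (hnn v hv)
      _ = P'.sup' hP' (fun w => w ⬝ᵥ Sstar⁻¹ *ᵥ w) * k := by
          rw [← Finset.sum_mul, hsum]; ring
end
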